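/- For a finite simple graph G and a locally injective function f : V(G) → ℝ, the sum over all vertices x of the symmetric index j_f(x) = (i_f(x) + i_{-f}(x))/2 equals the Euler characteristic of G, where i_g(x) = 1 - χ(S_g^-(x)) is the Poincaré–Hopf index. -/
import Mathlib


open scoped Classical

universe u

/-- The Euler characteristic of a finite simple graph:
`χ(G) = ∑_k (-1)^k v_k`, where `v_k` is the number of `(k+1)`-cliques. -/
noncomputable def eulerChar {V : Type u} [Fintype V] (G : SimpleGraph V) : ℤ :=
  ∑ k ∈ Finset.range (Fintype.card V),
    (-1 : ℤ) ^ k * ({s : Finset V | G.IsNClique (k + 1) s}.ncard : ℤ)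

/-- `f` is locally injective: `f x ≠ f y` on every edge. -/
def LocallyInjective {V : Type u} (G : SimpleGraph V) (f : V → ℝ) : Prop :=
  ∀ ⦃x y : V⦄, G.Adj x y → f x ≠ f y

/-- The Poincaré–Hopf index `i_f(x) = 1 - χ(S_f^-(x))`, where `S_f^-(x)` is the
subgraph of the unit sphere induced by `{y ∈ S(x) : f y < f x}`. -/
noncomputable def phIndex {V : Type u} [Fintype V] (G : SimpleGraph V)
    (f : V → ℝ) (x : V) : ℤ :=
  1 - eulerChar (G.induce {y : V | G.Adj x y ∧ f y < f x})

open Finset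

variable {V : Type u} [Fintype V]
noncomputable def cliqueFinset' (G : SimpleGraph V) : Finset (Finset V) :=
  univ.filter fun s => s.Nonempty ∧ G.IsClique (s : Set V)

lemma mem_cliqueFinset' {G : SimpleGraph V} {s : Finset V} :
    s ∈ cliqueFinset' G ↔ s.Nonempty ∧ G.IsClique (s : Set V) := by
  simp [cliqueFinset']

lemma eulerChar_eq_sum (G : SimpleGraph V) :
    eulerChar G = ∑ s ∈ cliqueFinset' G, (-1 : ℤ) ^ (s.card - 1) := by
  rw [eulerChar, ← Finset.sum_fiberwise_of_maps_to
    (g := fun s : Finset V => s.card - 1) (t := Finset.range (Fintype.card V)) ?_]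
  · refine Finset.sum_congr rfl fun k _ => ?_
    have hset : {s : Finset V | G.IsNClique (k + 1) s}.ncard
        = ((cliqueFinset' G).filter fun s => s.card - 1 = k).card := by
      rw [Set.ncard_eq_toFinset_card']
      congr 1
      ext s
      simp only [Set.mem_toFinset, Set.mem_setOf_eq, SimpleGraph.isNClique_iff,
        Finset.mem_filter, mem_cliqueFinset']
      constructor
      · rintro ⟨hc, hcard⟩
        refine ⟨⟨Finset.card_pos.mp (by omega), hc⟩, by omega⟩
      · rintro ⟨⟨hne, hc⟩, hk⟩
        have := Finset.card_pos.mpr hne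
        exact ⟨hc, by omega⟩
    rw [hset]
    rw [Finset.sum_congr rfl (fun s hs => ?_) (g := fun _ => (-1 : ℤ) ^ k)]
    · simp [mul_comm]
    · simp only [Finset.mem_filter] at hs
      rw [hs.2]
  · intro s hs
    rw [mem_cliqueFinset'] at hs
    have h1 := Finset.card_pos.mpr hs.1
    have h2 : s.card ≤ Fintype.card V := by
      simpa using Finset.card_le_univ s
    simp only [Finset.mem_range]
    omega

lemma eulerChar_induce (G : SimpleGraph V) (A : Set V) [Fintype A] :
    eulerChar (G.induce A) =
      ∑ t ∈ univ.filter (fun t : Finset V => t.Nonempty ∧ G.IsClique (t : Set V) ∧ ↑t ⊆ A),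
        (-1 : ℤ) ^ (t.card - 1) := by
  rw [eulerChar_eq_sum]
  refine Finset.sum_nbij' (i := fun s : Finset A => s.map (Function.Embedding.subtype _))
    (j := fun t : Finset V => t.subtype (· ∈ A)) ?_ ?_ ?_ ?_ ?_
  · intro s hs
    rw [mem_cliqueFinset'] at hs
    obtain ⟨hne, hc⟩ := hs
    simp only [mem_filter, Finset.mem_univ, true_and]
    refine ⟨hne.map, ?_, ?_⟩
    · intro x hx y hy hxy
      simp only [Finset.coe_map, Set.mem_image, Finset.mem_coe,
        Function.Embedding.coe_subtype] at hx hy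
      obtain ⟨a, ha, rfl⟩ := hx
      obtain ⟨b, hb, rfl⟩ := hy
      have hab : a ≠ b := fun h => hxy (by rw [h])
      exact hc (Finset.mem_coe.mpr ha) (Finset.mem_coe.mpr hb) hab
    · intro x hx
      simp only [Finset.coe_map, Set.mem_image, Finset.mem_coe,
        Function.Embedding.coe_subtype] at hx
      obtain ⟨a, -, rfl⟩ := hx
      exact a.2
  · intro t ht
    simp only [Finset.mem_filter, Finset.mem_univ, true_and] at ht
    obtain ⟨hne, hc, hsub⟩ := ht
    rw [mem_cliqueFinset']
    refine ⟨?_, ?_⟩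
    · obtain ⟨x, hx⟩ := hne
      exact ⟨⟨x, hsub hx⟩, Finset.mem_subtype.mpr hx⟩
    · intro a ha b hb hab
      simp only [Finset.mem_coe, Finset.mem_subtype] at ha hb
      exact hc ha hb (Subtype.coe_ne_coe.mpr hab)
  · intro s hs
    ext a
    simp [Finset.mem_subtype]
  · intro t ht
    simp only [Finset.mem_filter, Finset.mem_univ, true_and] at ht
    simp only [Finset.subtype_map]
    exact Finset.filter_true_of_mem fun x hx => ht.2.2 hx
  · intro s hs
    rw [Finset.card_map]

theorem sum_phIndex (G : SimpleGraph V) (f : V → ℝ) (hf : LocallyInjective G f) :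
    ∑ x : V, phIndex G f x = eulerChar G := by
  simp only [phIndex]
  rw [Finset.sum_sub_distrib, Finset.sum_const, Finset.card_univ, nsmul_eq_mul, mul_one]
  simp only [eulerChar_induce]
  have key : ∑ x : V, ∑ t ∈ univ.filter (fun t : Finset V =>
          t.Nonempty ∧ G.IsClique (t : Set V) ∧ ↑t ⊆ {y : V | G.Adj x y ∧ f y < f x}),
        (-1 : ℤ) ^ (t.card - 1)
      = ∑ t ∈ univ.filter (fun t : Finset V => G.IsClique (t : Set V) ∧ 2 ≤ t.card),
        (-1 : ℤ) ^ (t.card - 2) := by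
    rw [Finset.sum_sigma']
    refine Finset.sum_bij' (fun p _ => insert p.1 p.2)
      (fun t ht => ⟨(t.exists_max_image f (Finset.card_pos.mp (by
          simp only [Finset.mem_filter] at ht; omega))).choose,
        t.erase (t.exists_max_image f (Finset.card_pos.mp (by
          simp only [Finset.mem_filter] at ht; omega))).choose⟩)
      ?_ ?_ ?_ ?_ ?_
    · rintro ⟨x, s⟩ hp
      simp only [Finset.mem_sigma, Finset.mem_filter, Finset.mem_univ, true_and,
        Set.subset_def, Finset.mem_coe, Set.mem_setOf_eq] at hp
      obtain ⟨hne, hc, hsub⟩ := hp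
      have hxs : x ∉ s := fun hx => G.irrefl (hsub x hx).1
      simp only [Finset.mem_filter, Finset.mem_univ, true_and]
      constructor
      · rw [Finset.coe_insert, SimpleGraph.isClique_insert]
        exact ⟨hc, fun b hb _ => (hsub b hb).1⟩
      · rw [Finset.card_insert_of_notMem hxs]
        have := Finset.card_pos.mpr hne
        omega
    · rintro t ht
      have htf := ht
      simp only [Finset.mem_filter, Finset.mem_univ, true_and] at htf
      obtain ⟨hc, hcard⟩ := htf
      have main : ∀ h : t.Nonempty,
          (⟨(t.exists_max_image f h).choose, t.erase (t.exists_max_image f h).choose⟩ :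
            (_ : V) × Finset V) ∈ univ.sigma (fun x => univ.filter (fun s : Finset V =>
              s.Nonempty ∧ G.IsClique (s : Set V) ∧
                ↑s ⊆ {y : V | G.Adj x y ∧ f y < f x})) := by
        intro h
        obtain ⟨hmem, hmax⟩ := (t.exists_max_image f h).choose_spec
        set m := (t.exists_max_image f h).choose with hm
        simp only [Finset.mem_sigma, Finset.mem_filter, Finset.mem_univ, true_and,
          Set.subset_def, Finset.mem_coe, Set.mem_setOf_eq]
        refine ⟨?_, ?_, ?_⟩
        · rw [← Finset.card_pos, Finset.card_erase_of_mem hmem]; omega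
        · exact hc.subset (by rw [Finset.coe_erase]; exact Set.diff_subset)
        · intro y hy
          have hyt := Finset.mem_of_mem_erase hy
          have hym : y ≠ m := Finset.ne_of_mem_erase hy
          have hadj : G.Adj m y := hc hmem hyt (Ne.symm hym)
          exact ⟨hadj, lt_of_le_of_ne (hmax y hyt) fun h' => hf hadj h'.symm⟩
      have hne2 : t.Nonempty := Finset.card_pos.mp (by
        simp only [Finset.mem_filter] at ht; omega)
      exact main hne2
    · rintro ⟨x, s⟩ hp
      simp only [Finset.mem_sigma, Finset.mem_filter, Finset.mem_univ, true_and,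
        Set.subset_def, Finset.mem_coe, Set.mem_setOf_eq] at hp
      obtain ⟨hne, hc, hsub⟩ := hp
      have hxs : x ∉ s := fun hx => G.irrefl (hsub x hx).1
      have hmx : ∀ h : (insert x s).Nonempty,
          ((insert x s).exists_max_image f h).choose = x := by
        intro h
        obtain ⟨hmem, hmax⟩ := ((insert x s).exists_max_image f h).choose_spec
        rcases Finset.mem_insert.mp hmem with h' | h'
        · exact h'
        · exfalso
          have h1 : f (((insert x s).exists_max_image f h).choose) < f x := (hsub _ h').2
          have h2 := hmax x (Finset.mem_insert_self x s)
          linarith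
      refine Sigma.ext ?_ (heq_of_eq ?_) <;> simp only
      · exact hmx ⟨x, Finset.mem_insert_self x s⟩
      · rw [hmx ⟨x, Finset.mem_insert_self x s⟩]
        exact Finset.erase_insert hxs
    · rintro t ht
      simp only
      have main : ∀ h : t.Nonempty,
          insert (t.exists_max_image f h).choose
            (t.erase (t.exists_max_image f h).choose) = t :=
        fun h => Finset.insert_erase (t.exists_max_image f h).choose_spec.1
      have hne : t.Nonempty := Finset.card_pos.mp (by
        simp only [Finset.mem_filter] at ht; omega)
      exact main hne
    · rintro ⟨x, s⟩ hp
      simp only [Finset.mem_sigma, Finset.mem_filter, Finset.mem_univ, true_and,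
        Set.subset_def, Finset.mem_coe, Set.mem_setOf_eq] at hp
      obtain ⟨hne, hc, hsub⟩ := hp
      have hxs : x ∉ s := fun hx => G.irrefl (hsub x hx).1
      simp only
      rw [Finset.card_insert_of_notMem hxs]
      congr 1
  rw [key, eulerChar_eq_sum,
    ← Finset.sum_filter_add_sum_filter_not (cliqueFinset' G) (fun t => 2 ≤ t.card)]
  have h2 : (cliqueFinset' G).filter (fun t => 2 ≤ t.card)
      = univ.filter (fun t : Finset V => G.IsClique (t : Set V) ∧ 2 ≤ t.card) := by
    ext t
    simp only [Finset.mem_filter, mem_cliqueFinset', Finset.mem_univ, true_and]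
    constructor
    · rintro ⟨⟨-, hc⟩, h⟩; exact ⟨hc, h⟩
    · rintro ⟨hc, h⟩; exact ⟨⟨Finset.card_pos.mp (by omega), hc⟩, h⟩
  have h1 : ∑ t ∈ (cliqueFinset' G).filter (fun t => ¬ 2 ≤ t.card),
      (-1 : ℤ) ^ (t.card - 1) = (Fintype.card V : ℤ) := by
    have hset : (cliqueFinset' G).filter (fun t => ¬ 2 ≤ t.card)
        = univ.image (fun x : V => ({x} : Finset V)) := by
      ext t
      simp only [Finset.mem_filter, mem_cliqueFinset', Finset.mem_image, Finset.mem_univ,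
        true_and]
      constructor
      · rintro ⟨⟨hne, -⟩, h⟩
        have := Finset.card_pos.mpr hne
        obtain ⟨x, hx⟩ := Finset.card_eq_one.mp (by omega : t.card = 1)
        exact ⟨x, hx.symm⟩
      · rintro ⟨x, rfl⟩
        refine ⟨⟨Finset.singleton_nonempty x, ?_⟩, by simp⟩
        rw [Finset.coe_singleton]
        exact G.isClique_singleton x
    rw [hset, Finset.sum_image (fun x _ y _ h => Finset.singleton_injective h)]
    simp [Finset.card_univ]
  rw [h1, h2]
  have h3 : ∑ t ∈ univ.filter (fun t : Finset V => G.IsClique (t : Set V) ∧ 2 ≤ t.card),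
      (-1 : ℤ) ^ (t.card - 1)
      = - ∑ t ∈ univ.filter (fun t : Finset V => G.IsClique (t : Set V) ∧ 2 ≤ t.card),
      (-1 : ℤ) ^ (t.card - 2) := by
    rw [← Finset.sum_neg_distrib]
    refine Finset.sum_congr rfl fun t ht => ?_
    simp only [Finset.mem_filter] at ht
    have he : t.card - 1 = (t.card - 2) + 1 := by omega
    rw [he, pow_succ]; ring
  rw [h3]; ring


private lemma neg_locInj {V : Type u} {G : SimpleGraph V} {f : V → ℝ}
    (hf : LocallyInjective G f) : LocallyInjective G (-f) := by
  intro x y hxy h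
  exact hf hxy (by simpa using neg_injective h)

/-- For a locally injective `f`, the symmetric indices
`j_f(x) = (i_f(x) + i_{-f}(x))/2` sum up to the Euler characteristic of `G`. -/
theorem stmt8 {V : Type u} [Fintype V] (G : SimpleGraph V) (f : V → ℝ)
    (hf : LocallyInjective G f) :
    ∑ x : V, ((phIndex G f x : ℚ) + (phIndex G (-f) x : ℚ)) / 2
      = (eulerChar G : ℚ) := by
  have h1 := sum_phIndex G f hf
  have h2 := sum_phIndex G (-f) (neg_locInj hf)
  rw [← Finset.sum_div, Finset.sum_add_distrib]
  have e1 : ∑ x : V, (phIndex G f x : ℚ) = (eulerChar G : ℚ) := by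
    rw [← h1]; push_cast; ring
  have e2 : ∑ x : V, (phIndex G (-f) x : ℚ) = (eulerChar G : ℚ) := by
    rw [← h2]; push_cast; ring
  rw [e1, e2]; ring
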